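/- For every positive integer n, the n×n magog matrices with no entry equal to −1 are exactly the permutation matrices of 132-avoiding permutations of {1,…,n}: a permutation matrix is a magog matrix if and only if its permutation avoids the pattern 132. -/
import Mathlib


/-- An `n × n` square sign matrix: a `{0, 1, -1}`-matrix whose rows and columns
all sum to 1, whose partial column sums lie in `{0, 1}`, and whose partial row
sums are nonnegative. -/
def IsSquareSign (n : ℕ) (A : Fin n → Fin n → ℤ) : Prop :=
  (∀ i j, A i j = -1 ∨ A i j = 0 ∨ A i j = 1) ∧
  (∀ j, ∑ i, A i j = 1) ∧
  (∀ i, ∑ j, A i j = 1) ∧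
  (∀ i j : Fin n, 0 ≤ ∑ i' ∈ Finset.Iic i, A i' j ∧ ∑ i' ∈ Finset.Iic i, A i' j ≤ 1) ∧
  (∀ i j : Fin n, 0 ≤ ∑ j' ∈ Finset.Iic j, A i j')

/-- An `n × n` magog matrix: a square sign matrix satisfying the
`(i,j)`-special inequalities (stated here with 0-based indices `i, j`,
corresponding to the paper's 1-based `i+1, j+1` with `1 ≤ i, j ≤ n-2`). -/
def IsMagog (n : ℕ) (A : Fin n → Fin n → ℤ) : Prop :=
  IsSquareSign n A ∧
  ∀ (i j : ℕ) (hi : i + 2 < n) (hj : j + 2 < n),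
    0 ≤ (∑ j' ∈ Finset.Iic (⟨j, by omega⟩ : Fin n), A ⟨i + 1, by omega⟩ j')
      + (∑ i' ∈ Finset.Iic (⟨i + 1, by omega⟩ : Fin n), A i' ⟨j + 1, by omega⟩)
      - (∑ i' ∈ Finset.Iic (⟨i, by omega⟩ : Fin n), A i' ⟨j, by omega⟩)

/-- The permutation matrix of a permutation `π`: `M i j = 1` iff `π i = j`. -/
def permMatrix (n : ℕ) (π : Equiv.Perm (Fin n)) : Fin n → Fin n → ℤ :=
  fun i j => if π i = j then 1 else 0

/-- `π` contains a `132` pattern: there are `i < j < k` with `π i < π k < π j`. -/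
def Has132 (n : ℕ) (π : Equiv.Perm (Fin n)) : Prop :=
  ∃ i j k : Fin n, i < j ∧ j < k ∧ π i < π k ∧ π k < π j

lemma rowPartial (n : ℕ) (π : Equiv.Perm (Fin n)) (i j : Fin n) :
    ∑ j' ∈ Finset.Iic j, permMatrix n π i j' = if π i ≤ j then 1 else 0 := by
  unfold permMatrix
  rw [Finset.sum_ite_eq (Finset.Iic j) (π i) (fun _ => (1:ℤ))]; simp [Finset.mem_Iic]

lemma colPartial (n : ℕ) (π : Equiv.Perm (Fin n)) (i j : Fin n) :
    ∑ i' ∈ Finset.Iic i, permMatrix n π i' j = if π.symm j ≤ i then 1 else 0 := by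
  unfold permMatrix
  simp only [Equiv.apply_eq_iff_eq_symm_apply]
  rw [Finset.sum_ite_eq' (Finset.Iic i) (π.symm j) (fun _ => (1:ℤ))]; simp [Finset.mem_Iic]

lemma permSquareSign (n : ℕ) (π : Equiv.Perm (Fin n)) : IsSquareSign n (permMatrix n π) := by
  refine ⟨fun i j => ?_, fun j => ?_, fun i => ?_, fun i j => ?_, fun i j => ?_⟩
  · unfold permMatrix; split <;> simp
  · simp only [permMatrix, Equiv.apply_eq_iff_eq_symm_apply]
    rw [Finset.sum_ite_eq' Finset.univ (π.symm j) (fun _ => (1:ℤ))]; simp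
  · simp only [permMatrix]
    rw [Finset.sum_ite_eq Finset.univ (π i) (fun _ => (1:ℤ))]; simp
  · rw [colPartial]; split <;> norm_num
  · rw [rowPartial]; split <;> norm_num

lemma permMagog_iff (n : ℕ) (π : Equiv.Perm (Fin n)) :
    IsMagog n (permMatrix n π) ↔ ¬ Has132 n π := by
  constructor
  · rintro ⟨-, hspec⟩ ⟨a, b, c, hab, hbc, hac, hcb⟩
    have hne : ((Finset.Icc (π a) (π c)).filter (fun v => π.symm v < b)).Nonempty :=
      ⟨π a, by simp [Finset.mem_Icc, le_of_lt hac, hab]⟩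
    obtain ⟨v, hvS, hvmax⟩ :=
      Finset.exists_max_image ((Finset.Icc (π a) (π c)).filter (fun v => π.symm v < b)) id hne
    rw [Finset.mem_filter, Finset.mem_Icc] at hvS
    obtain ⟨⟨hva, hvc⟩, hvb⟩ := hvS
    have hvnec : v ≠ π c := by
      intro h; rw [h] at hvb; simp at hvb; exact absurd hvb (not_lt.mpr (le_of_lt hbc))
    have hvltc : v < π c := lt_of_le_of_ne hvc hvnec
    have hw : v.val + 1 < n := lt_of_le_of_lt (Nat.succ_le_of_lt hvltc) (π c).isLt
    set w : Fin n := ⟨v.val + 1, hw⟩ with hwdef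
    have hwc : w ≤ π c := hvltc
    have hvw : v < w := by simp [Fin.lt_def, hwdef]
    have hwb : b < π.symm w := by
      have h1 : π.symm w ≠ b := by
        intro h
        have hwb' : w = π b := by rw [← h]; simp
        have : π b ≤ π c := hwb' ▸ hwc
        exact absurd this (not_le.mpr hcb)
      have h2 : ¬ π.symm w < b := by
        intro h
        have hmem : w ∈ (Finset.Icc (π a) (π c)).filter (fun v => π.symm v < b) := by
          rw [Finset.mem_filter, Finset.mem_Icc]
          exact ⟨⟨le_of_lt (lt_of_le_of_lt hva hvw), hwc⟩, h⟩
        exact absurd (hvmax w hmem) (not_le.mpr hvw)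
      exact lt_of_le_of_ne (not_lt.mp h2) (Ne.symm h1)
    have hb1 : 1 ≤ b.val := Nat.one_le_iff_ne_zero.mpr (by
      intro h; have := Fin.lt_def.mp hab; omega)
    have hi : b.val - 1 + 2 < n := by
      have := Fin.lt_def.mp hbc; have := c.isLt; omega
    have hj : v.val + 2 < n := by
      have h1 : (π c).val < (π b).val := Fin.lt_def.mp hcb
      have h2 : v.val < (π c).val := Fin.lt_def.mp hvltc
      have := (π b).isLt; omega
    have h := hspec (b.val - 1) v.val hi hj
    rw [rowPartial, colPartial, colPartial] at h
    have e1 : (⟨b.val - 1 + 1, by omega⟩ : Fin n) = b := Fin.ext (by simp; omega)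
    have e2 : (⟨v.val, by omega⟩ : Fin n) = v := Fin.ext rfl
    have e3 : (⟨v.val + 1, by omega⟩ : Fin n) = w := Fin.ext rfl
    rw [e1, e2, e3] at h
    have hA : ¬ π b ≤ v := not_le.mpr (lt_trans hvw (lt_of_le_of_lt hwc hcb))
    have hB : ¬ π.symm w ≤ b := not_le.mpr hwb
    have hC : π.symm v ≤ (⟨b.val - 1, by omega⟩ : Fin n) :=
      Fin.le_def.mpr (by have := Fin.lt_def.mp hvb; simp; omega)
    rw [if_neg hA, if_neg hB, if_pos hC] at h
    norm_num at h
  · intro h132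
    refine ⟨permSquareSign n π, fun i j hi hj => ?_⟩
    have hjn : j < n := by omega
    have hj1n : j + 1 < n := by omega
    have hin : i < n := by omega
    have hi1n : i + 1 < n := by omega
    show 0 ≤ (∑ j' ∈ Finset.Iic (⟨j, hjn⟩ : Fin n), permMatrix n π ⟨i+1, hi1n⟩ j')
      + (∑ i' ∈ Finset.Iic (⟨i+1, hi1n⟩ : Fin n), permMatrix n π i' ⟨j+1, hj1n⟩)
      - (∑ i' ∈ Finset.Iic (⟨i, hin⟩ : Fin n), permMatrix n π i' ⟨j, hjn⟩)
    rw [rowPartial, colPartial, colPartial]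
    by_cases h3 : π.symm ⟨j, hjn⟩ ≤ (⟨i, hin⟩ : Fin n)
    · by_cases h1 : π ⟨i+1, hi1n⟩ ≤ (⟨j, hjn⟩ : Fin n)
      · rw [if_pos h1, if_pos h3]; split <;> norm_num
      · by_cases h2 : π.symm ⟨j+1, hj1n⟩ ≤ (⟨i+1, hi1n⟩ : Fin n)
        · rw [if_neg h1, if_pos h2, if_pos h3]; norm_num
        · exfalso
          push_neg at h1 h2
          have hne : π (⟨i+1, hi1n⟩ : Fin n) ≠ ⟨j+1, hj1n⟩ := by
            intro h
            have hsy : π.symm (⟨j+1, hj1n⟩ : Fin n) = ⟨i+1, hi1n⟩ := by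
              rw [← h, Equiv.symm_apply_apply]
            rw [hsy] at h2
            exact lt_irrefl _ h2
          apply h132
          refine ⟨π.symm ⟨j, hjn⟩, ⟨i+1, hi1n⟩, π.symm ⟨j+1, hj1n⟩, ?_, h2, ?_, ?_⟩
          · exact lt_of_le_of_lt h3 (Fin.mk_lt_mk.mpr (by omega))
          · rw [Equiv.apply_symm_apply, Equiv.apply_symm_apply]
            exact Fin.mk_lt_mk.mpr (by omega)
          · rw [Equiv.apply_symm_apply]
            have hv := Fin.lt_def.mp h1
            have hne' : (π (⟨i+1, hi1n⟩ : Fin n)).val ≠ j + 1 :=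
              fun hh => hne (Fin.ext hh)
            refine Fin.lt_def.mpr ?_
            simp only [Fin.val_mk] at hv ⊢
            omega
    · rw [if_neg h3]; split <;> split <;> norm_num

lemma two_ones (n : ℕ) (g : Fin n → ℤ) (hg : ∀ x, g x = 0 ∨ g x = 1)
    (hs : ∑ x, g x = 1) {x y : Fin n} (hxy : x ≠ y) (hx : g x = 1) (hy : g y = 1) : False := by
  have h1 : ∑ z ∈ ({x, y} : Finset (Fin n)), g z = 2 := by
    rw [Finset.sum_pair hxy, hx, hy]; norm_num
  have h2 : ∑ z ∈ ({x, y} : Finset (Fin n)), g z ≤ ∑ z, g z :=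
    Finset.sum_le_sum_of_subset_of_nonneg (Finset.subset_univ _)
      (fun z _ _ => by rcases hg z with h | h <;> simp [h])
  omega

lemma exists_perm_of_magog (n : ℕ) (A : Fin n → Fin n → ℤ) (hM : IsMagog n A)
    (hno : ∀ i j, A i j ≠ -1) : ∃ π : Equiv.Perm (Fin n), A = permMatrix n π := by
  obtain ⟨⟨hent, hcol, hrow, -, -⟩, -⟩ := hM
  have h01 : ∀ i j, A i j = 0 ∨ A i j = 1 := by
    intro i j; rcases hent i j with h | h | h
    · exact absurd h (hno i j)
    · exact Or.inl h
    · exact Or.inr h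
  have hex : ∀ i, ∃ j, A i j = 1 := by
    intro i
    by_contra h
    push_neg at h
    have hz : ∀ j, A i j = 0 := fun j => (h01 i j).resolve_right (h j)
    have := hrow i
    simp [hz] at this
  choose f hf using hex
  have hinj : Function.Injective f := by
    intro x y hxy'
    by_contra hxy
    exact two_ones n (fun i' => A i' (f x)) (fun i' => h01 i' (f x)) (hcol (f x)) hxy
      (hf x) (hxy' ▸ hf y)
  let π := Equiv.ofBijective f (Finite.injective_iff_bijective.mp hinj)
  refine ⟨π, funext fun i => funext fun j => ?_⟩
  have hπ : π i = f i := rfl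
  unfold permMatrix
  rw [hπ]
  split_ifs with h
  · rw [← h]; exact hf i
  · rcases h01 i j with h0 | h1
    · exact h0
    · exact (two_ones n (A i) (h01 i) (hrow i) (fun hh => h hh.symm) h1 (hf i)).elim

/-- The `n × n` magog matrices with no entry equal to `-1` are exactly the
permutation matrices of `132`-avoiding permutations; moreover a permutation
matrix is a magog matrix if and only if its permutation avoids `132`. -/
theorem magog_no_neg_one_iff_132_avoiding (n : ℕ) (hn : 0 < n) :
    (∀ A : Fin n → Fin n → ℤ,
      (IsMagog n A ∧ ∀ i j, A i j ≠ -1) ↔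
        ∃ π : Equiv.Perm (Fin n), ¬ Has132 n π ∧ A = permMatrix n π) ∧
    (∀ π : Equiv.Perm (Fin n), IsMagog n (permMatrix n π) ↔ ¬ Has132 n π) := by
  refine ⟨fun A => ⟨?_, ?_⟩, fun π => permMagog_iff n π⟩
  · rintro ⟨hM, hno⟩
    obtain ⟨π, hA⟩ := exists_perm_of_magog n A hM hno
    exact ⟨π, (permMagog_iff n π).mp (hA ▸ hM), hA⟩
  · rintro ⟨π, h132, rfl⟩
    refine ⟨(permMagog_iff n π).mpr h132, fun i j => ?_⟩
    unfold permMatrix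
    split <;> norm_num
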